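/- Let m be odd and gcd(s, m) = 1. The set {h^{2^s} + h^{2^{m-s}} : h ∈ F_{2^m}} is exactly {x ∈ F_{2^m} : Tr^m_1(x) = 0}, and the map h ↦ h^{2^s} + h^{2^{m-s}} is two-to-one (h and h+1 have the same image). -/

import Mathlib

open Finset

theorem stmt_13 (m s : ℕ) (hmodd : Odd m) (hsm : Nat.gcd s m = 1)
    (F : Type*) [Field F] [Fintype F]
    (hF : Fintype.card F = 2 ^ m) :
    ({x : F | ∃ h : F, x = h ^ 2 ^ s + h ^ 2 ^ (m - s)} =
        {x : F | (∑ i ∈ Finset.range m, x ^ 2 ^ i) = 0}) ∧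
    (∀ h₁ h₂ : F, h₁ ^ 2 ^ s + h₁ ^ 2 ^ (m - s) = h₂ ^ 2 ^ s + h₂ ^ 2 ^ (m - s) ↔
        h₂ = h₁ ∨ h₂ = h₁ + 1) := by
  classical
  have hm1 : 1 ≤ m := hmodd.pos
  -- characteristic 2
  obtain ⟨p, hC⟩ := CharP.exists F
  haveI := hC
  obtain ⟨n, hp, hcard⟩ := FiniteField.card F p
  have hp2 : p = 2 := by
    have hdvd : p ∣ 2 ^ m := by
      rw [← hF, hcard]
      exact dvd_pow_self p n.ne_zero
    exact (Nat.prime_dvd_prime_iff_eq hp Nat.prime_two).mp (hp.dvd_of_dvd_pow hdvd)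
  subst hp2
  -- basic facts
  have hpow : ∀ x : F, x ^ 2 ^ m = x := by
    intro x; rw [← hF]; exact FiniteField.pow_card x
  haveI : Fact (Nat.Prime 2) := ⟨Nat.prime_two⟩
  have hfrob : ∀ (k : ℕ) (x y : F), (x + y) ^ 2 ^ k = x ^ 2 ^ k + y ^ 2 ^ k := by
    intro k x y; exact add_pow_char_pow x y 2 k
  have haddz : ∀ a b : F, a + b = 0 ↔ a = b := by
    intro a b
    rw [CharTwo.add_eq_iff_eq_add, zero_add]
  have hself : ∀ a : F, a + a = 0 := CharTwo.add_self_eq_zero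
  -- iterate lemma
  have hiter : ∀ (x : F) (k : ℕ), x ^ 2 ^ k = x → ∀ j, x ^ 2 ^ (k * j) = x := by
    intro x k hx j
    induction j with
    | zero => simp
    | succ j ih =>
      have h2 : (2 : ℕ) ^ (k * (j + 1)) = 2 ^ (k * j) * 2 ^ k := by
        rw [← pow_add]; ring_nf
      rw [h2, pow_mul, ih, hx]
  -- squaring lemma from coprimality
  have hsq : ∀ x : F, x ^ (2 : ℕ) ^ m = x := hpow
  have hfix : ∀ (k : ℕ), Nat.Coprime k m → ∀ h : F, h ^ 2 ^ k = h → h = 0 ∨ h = 1 := by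
    intro k hk h hh
    have h2 : h ^ 2 = h := by
      rcases eq_or_lt_of_le hm1 with hm | hm
      · have := hpow h
        rw [← hm] at this
        simpa using this
      · have hk0 : k ≠ 0 := by
          intro h0; subst h0
          simp [Nat.Coprime] at hk
          omega
        obtain ⟨a, -, ha⟩ := Nat.exists_mul_mod_eq_one_of_coprime hk hm
        have hdm : m * (k * a / m) + 1 = k * a := by
          conv_rhs => rw [← Nat.div_add_mod (k * a) m, ha]
        have h1 : h ^ 2 ^ (k * a) = h := hiter h k hh a
        have h3 : h ^ 2 ^ (m * (k * a / m)) = h := hiter h m (hpow h) _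
        calc h ^ 2 = (h ^ 2 ^ (m * (k * a / m))) ^ 2 := by rw [h3]
          _ = h ^ (2 ^ (m * (k * a / m)) * 2) := (pow_mul h _ 2).symm
          _ = h ^ 2 ^ (m * (k * a / m) + 1) := by rw [pow_succ]
          _ = h ^ 2 ^ (k * a) := by rw [hdm]
          _ = h := h1
    have hfac : h * (h - 1) = 0 := by
      have : h ^ 2 - h = 0 := by rw [h2, sub_self]
      linear_combination this
    rcases mul_eq_zero.mp hfac with h0 | h1
    · exact Or.inl h0
    · exact Or.inr (by rwa [sub_eq_zero] at h1)
  -- kernel characterization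
  have hker : ∀ h : F, h ^ 2 ^ s + h ^ 2 ^ (m - s) = 0 ↔ h = 0 ∨ h = 1 := by
    intro h
    constructor
    · intro hh
      have heq : h ^ 2 ^ s = h ^ 2 ^ (m - s) := (haddz _ _).mp hh
      rcases le_or_gt s m with hsle | hslt
      · -- raise both sides to 2^s
        have : (h ^ 2 ^ s) ^ 2 ^ s = (h ^ 2 ^ (m - s)) ^ 2 ^ s := by rw [heq]
        rw [← pow_mul, ← pow_mul, ← pow_add, ← pow_add, Nat.sub_add_cancel hsle] at this
        rw [hpow h] at this
        have hcop : Nat.Coprime (s + s) m := by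
          have h2m : Nat.Coprime 2 m := Nat.coprime_two_left.mpr hmodd
          have : Nat.Coprime (2 * s) m := Nat.Coprime.mul h2m hsm
          rwa [two_mul] at this
        exact hfix (s + s) hcop h this
      · have hms : m - s = 0 := Nat.sub_eq_zero_of_le hslt.le
        rw [hms, pow_zero, pow_one] at heq
        exact hfix s hsm h heq
    · rintro (rfl | rfl)
      · rw [zero_pow (by positivity), zero_pow (by positivity), add_zero]
      · rw [one_pow, one_pow]; exact hself 1
  -- second part
  have part2 : ∀ h₁ h₂ : F, h₁ ^ 2 ^ s + h₁ ^ 2 ^ (m - s) = h₂ ^ 2 ^ s + h₂ ^ 2 ^ (m - s) ↔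
      h₂ = h₁ ∨ h₂ = h₁ + 1 := by
    intro h₁ h₂
    have key : h₁ ^ 2 ^ s + h₁ ^ 2 ^ (m - s) = h₂ ^ 2 ^ s + h₂ ^ 2 ^ (m - s) ↔
        (h₁ + h₂) ^ 2 ^ s + (h₁ + h₂) ^ 2 ^ (m - s) = 0 := by
      rw [hfrob, hfrob]
      constructor
      · intro hh
        linear_combination hh + hself (h₂ ^ 2 ^ s + h₂ ^ 2 ^ (m - s))
      · intro hh
        linear_combination hh - hself (h₂ ^ 2 ^ s + h₂ ^ 2 ^ (m - s))
    rw [key, hker (h₁ + h₂)]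
    constructor
    · rintro (hh | hh)
      · exact Or.inl ((haddz h₁ h₂).mp hh).symm
      · right
        have : h₁ + (h₁ + h₂) = h₁ + 1 := by rw [hh]
        rw [← add_assoc, hself, zero_add] at this
        exact this
    · rintro (rfl | rfl)
      · exact Or.inl (hself h₂)
      · right; rw [← add_assoc, hself, zero_add]
  refine ⟨?_, part2⟩
  -- First part: via counting.
  -- additive maps
  let φ : F →+ F := AddMonoidHom.mk' (fun h => h ^ 2 ^ s + h ^ 2 ^ (m - s))
    (fun x y => by
      show (x + y) ^ 2 ^ s + (x + y) ^ 2 ^ (m - s)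
          = (x ^ 2 ^ s + x ^ 2 ^ (m - s)) + (y ^ 2 ^ s + y ^ 2 ^ (m - s))
      rw [hfrob, hfrob]; ring)
  let ψ : F →+ F := AddMonoidHom.mk' (fun x => ∑ i ∈ Finset.range m, x ^ 2 ^ i)
    (fun x y => by
      show (∑ i ∈ Finset.range m, (x + y) ^ 2 ^ i)
          = (∑ i ∈ Finset.range m, x ^ 2 ^ i) + ∑ i ∈ Finset.range m, y ^ 2 ^ i
      rw [← Finset.sum_add_distrib]
      exact Finset.sum_congr rfl fun i _ => hfrob i x y)
  have hφ : ∀ h : F, φ h = h ^ 2 ^ s + h ^ 2 ^ (m - s) := fun h => rfl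
  have hψ : ∀ x : F, ψ x = ∑ i ∈ Finset.range m, x ^ 2 ^ i := fun x => rfl
  -- shift lemma: ψ (x^2) = ψ x
  have hshift : ∀ x : F, ψ (x ^ 2) = ψ x := by
    intro x
    have e0 : ∀ i, (x ^ 2) ^ 2 ^ i = x ^ 2 ^ (i + 1) := by
      intro i
      rw [← pow_mul, ← pow_succ']
    have e1 : ∑ i ∈ Finset.range (m + 1), x ^ 2 ^ i
        = (∑ i ∈ Finset.range m, x ^ 2 ^ i) + x ^ 2 ^ m := Finset.sum_range_succ _ _
    have e2 : ∑ i ∈ Finset.range (m + 1), x ^ 2 ^ i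
        = (∑ i ∈ Finset.range m, x ^ 2 ^ (i + 1)) + x ^ 2 ^ 0 := Finset.sum_range_succ' _ _
    have e3 : (∑ i ∈ Finset.range m, x ^ 2 ^ (i + 1)) + x
        = (∑ i ∈ Finset.range m, x ^ 2 ^ i) + x := by
      calc (∑ i ∈ Finset.range m, x ^ 2 ^ (i + 1)) + x
          = (∑ i ∈ Finset.range m, x ^ 2 ^ (i + 1)) + x ^ 2 ^ 0 := by rw [pow_zero, pow_one]
        _ = ∑ i ∈ Finset.range (m + 1), x ^ 2 ^ i := e2.symm
        _ = (∑ i ∈ Finset.range m, x ^ 2 ^ i) + x ^ 2 ^ m := e1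
        _ = (∑ i ∈ Finset.range m, x ^ 2 ^ i) + x := by rw [hpow]
    have := add_right_cancel e3
    rw [hψ, hψ]
    calc ∑ i ∈ Finset.range m, (x ^ 2) ^ 2 ^ i
        = ∑ i ∈ Finset.range m, x ^ 2 ^ (i + 1) := Finset.sum_congr rfl fun i _ => e0 i
      _ = ∑ i ∈ Finset.range m, x ^ 2 ^ i := this
  have hTpow : ∀ (x : F) (k : ℕ), ψ (x ^ 2 ^ k) = ψ x := by
    intro x k
    induction k with
    | zero => simp
    | succ k ih =>
      have : x ^ 2 ^ (k + 1) = (x ^ 2 ^ k) ^ 2 := by rw [← pow_mul, ← pow_succ]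
      rw [this, hshift, ih]
  -- trace has values in {0,1}
  have hTsq : ∀ x : F, ψ x ^ 2 = ψ x := by
    intro x
    have : ψ x ^ 2 = ψ (x ^ 2) := by
      rw [hψ, hψ]
      have : (∑ i ∈ Finset.range m, x ^ 2 ^ i) ^ 2
          = ∑ i ∈ Finset.range m, (x ^ 2 ^ i) ^ 2 := by
        have := map_sum (frobenius F 2) (fun i => x ^ 2 ^ i) (Finset.range m)
        simp only [frobenius_def] at this
        exact this
      rw [this]
      exact Finset.sum_congr rfl fun i _ => by
        rw [← pow_mul, ← pow_mul, mul_comm]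
    rw [this, hshift]
  have hT01 : ∀ x : F, ψ x = 0 ∨ ψ x = 1 := by
    intro x
    have hfac : ψ x * (ψ x - 1) = 0 := by
      have : ψ x ^ 2 - ψ x = 0 := by rw [hTsq, sub_self]
      linear_combination this
    rcases mul_eq_zero.mp hfac with h0 | h1
    · exact Or.inl h0
    · exact Or.inr (by rwa [sub_eq_zero] at h1)
  -- trace is not identically zero
  have hTex : ∃ x : F, ψ x ≠ 0 := by
    by_contra hcon
    push_neg at hcon
    set P : Polynomial F := ∑ i ∈ Finset.range m, Polynomial.X ^ 2 ^ i with hP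
    have heval : ∀ x : F, P.eval x = ψ x := by
      intro x
      rw [hP, Polynomial.eval_finset_sum, hψ]
      exact Finset.sum_congr rfl fun i _ => by rw [Polynomial.eval_pow, Polynomial.eval_X]
    have hdeg : P.natDegree ≤ 2 ^ (m - 1) := by
      apply Polynomial.natDegree_sum_le_of_forall_le
      intro i hi
      rw [Polynomial.natDegree_X_pow]
      have hi' := Finset.mem_range.mp hi
      exact Nat.pow_le_pow_right (by norm_num) (by omega : i ≤ m - 1)
    have hzero : P = 0 := by
      apply Polynomial.eq_zero_of_natDegree_lt_card_of_eval_eq_zero P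
        (f := (id : F → F)) Function.injective_id
      · intro x; rw [heval]; exact hcon x
      · calc P.natDegree ≤ 2 ^ (m - 1) := hdeg
          _ < 2 ^ m := Nat.pow_lt_pow_right (by norm_num) (by omega)
          _ = Fintype.card F := hF.symm
    have hco : P.coeff (2 ^ (m - 1)) = 1 := by
      rw [hP, Polynomial.finset_sum_coeff]
      rw [Finset.sum_eq_single_of_mem (m - 1) (Finset.mem_range.mpr (by omega))]
      · rw [Polynomial.coeff_X_pow, if_pos rfl]
      · intro i hi hne
        rw [Polynomial.coeff_X_pow, if_neg]
        intro hcontra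
        exact hne (Nat.pow_right_injective (le_refl 2) hcontra.symm)
    rw [hzero, Polynomial.coeff_zero] at hco
    exact one_ne_zero hco.symm
  -- cardinalities
  have hcardF : Nat.card F = 2 ^ m := by rw [Nat.card_eq_fintype_card, hF]
  have hkerφ : (φ.ker : Set F) = {0, 1} := by
    ext h
    simp only [SetLike.mem_coe, AddMonoidHom.mem_ker, Set.mem_insert_iff, Set.mem_singleton_iff]
    exact hker h
  have hcardkerφ : Nat.card φ.ker = 2 := by
    have : Nat.card φ.ker = ({0, 1} : Set F).ncard := by
      rw [← hkerφ, ← Nat.card_coe_set_eq, SetLike.coe_sort_coe]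
    rw [this, Set.ncard_pair (zero_ne_one)]
  have hrangeψ : (ψ.range : Set F) = {0, 1} := by
    ext x
    simp only [SetLike.mem_coe, AddMonoidHom.mem_range, Set.mem_insert_iff,
      Set.mem_singleton_iff]
    constructor
    · rintro ⟨y, rfl⟩; exact hT01 y
    · rintro (rfl | rfl)
      · exact ⟨0, map_zero ψ⟩
      · obtain ⟨x, hx⟩ := hTex
        rcases hT01 x with h0 | h1
        · exact absurd h0 hx
        · exact ⟨x, h1⟩
  have hcardrangeψ : Nat.card ψ.range = 2 := by
    have : Nat.card ψ.range = ({0, 1} : Set F).ncard := by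
      rw [← hrangeψ, ← Nat.card_coe_set_eq, SetLike.coe_sort_coe]
    rw [this, Set.ncard_pair (zero_ne_one)]
  -- first isomorphism theorem counting
  have hquotφ : Nat.card (F ⧸ φ.ker) = Nat.card φ.range :=
    Nat.card_congr (QuotientAddGroup.quotientKerEquivRange φ).toEquiv
  have hquotψ : Nat.card (F ⧸ ψ.ker) = Nat.card ψ.range :=
    Nat.card_congr (QuotientAddGroup.quotientKerEquivRange ψ).toEquiv
  have htotφ : Nat.card F = Nat.card (F ⧸ φ.ker) * Nat.card φ.ker :=
    AddSubgroup.card_eq_card_quotient_mul_card_addSubgroup φ.ker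
  have htotψ : Nat.card F = Nat.card (F ⧸ ψ.ker) * Nat.card ψ.ker :=
    AddSubgroup.card_eq_card_quotient_mul_card_addSubgroup ψ.ker
  have hpowm : (2 : ℕ) ^ m = 2 ^ (m - 1) * 2 := by
    rw [← pow_succ]
    congr 1
    omega
  have hrangeφcard : Nat.card φ.range = 2 ^ (m - 1) := by
    have h1 : Nat.card φ.range * Nat.card φ.ker = Nat.card F := by
      rw [← hquotφ]; exact htotφ.symm
    rw [hcardkerφ, hcardF] at h1
    omega
  have hkerψcard : Nat.card ψ.ker = 2 ^ (m - 1) := by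
    have h1 : Nat.card ψ.range * Nat.card ψ.ker = Nat.card F := by
      rw [← hquotψ]; exact htotψ.symm
    rw [hcardrangeψ, hcardF] at h1
    omega
  -- inclusion of range φ in ker ψ
  have hincl : (φ.range : Set F) ⊆ (ψ.ker : Set F) := by
    rintro x ⟨h, rfl⟩
    simp only [SetLike.mem_coe, AddMonoidHom.mem_ker]
    rw [hφ, map_add ψ, hTpow, hTpow, hself]
  have hseteq : (φ.range : Set F) = (ψ.ker : Set F) := by
    apply Set.eq_of_subset_of_ncard_le hincl
    rw [← Nat.card_coe_set_eq, ← Nat.card_coe_set_eq,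
      SetLike.coe_sort_coe, SetLike.coe_sort_coe, hrangeφcard, hkerψcard]
  -- translate to the stated sets
  have hs1 : {x : F | ∃ h : F, x = h ^ 2 ^ s + h ^ 2 ^ (m - s)} = (φ.range : Set F) := by
    ext x
    simp only [Set.mem_setOf_eq, SetLike.mem_coe, AddMonoidHom.mem_range]
    constructor
    · rintro ⟨h, rfl⟩; exact ⟨h, rfl⟩
    · rintro ⟨h, rfl⟩; exact ⟨h, rfl⟩
  have hs2 : {x : F | (∑ i ∈ Finset.range m, x ^ 2 ^ i) = 0} = (ψ.ker : Set F) := by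
    ext x
    simp only [Set.mem_setOf_eq, SetLike.mem_coe, AddMonoidHom.mem_ker]
    exact Iff.rfl
  rw [hs1, hs2, hseteq]
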